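/- arXiv:2005.10496 — 2 statements merged into one kernel-verified Lean document; each statement's English description precedes it below -/
import Mathlib

section
/- Let p : E ⥤ D be a functor, let ι : E ⥤ D ↓ p be the functor e ↦ (p e, e, 𝟙_{p e}), and let q : G ⥤ D be a cloven Grothendieck fibration. Let Fun_{/D}^{cart}(D ↓ p, G) denote the category whose objects are functors F : (D ↓ p) ⥤ G with F ⋙ q = π (strictly over D) sending π-cartesian morphisms to q-cartesian morphisms, and whose morphisms are natural transformations whose components lie over identities of D; let Fun_{/D}(E, G) be defined analogously (with no cartesianness condition). Then restriction along ι induces an equivalence of categories Fun_{/D}^{cart}(D ↓ p, G) ≃ Fun_{/D}(E, G). -/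
open CategoryTheory CategoryTheory.Limits

/-- `φ` is a (strongly) cartesian morphism over `u : i ⟶ j` for the functor `q`. -/
def IsCart {E C : Type*} [Category E] [Category C] (q : E ⥤ C) {i j : C} (u : i ⟶ j)
    {z x : E} (φ : z ⟶ x) : Prop :=
  q.IsHomLift u φ ∧
    ∀ ⦃i' : C⦄ (v : i' ⟶ i) ⦃w : E⦄ (ψ : w ⟶ x), q.IsHomLift (v ≫ u) ψ →
      ∃! χ : w ⟶ z, q.IsHomLift v χ ∧ χ ≫ φ = ψ

variable {E D G : Type*} [Category E] [Category D] [Category G]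

/-- The canonical functor `ι : E ⥤ D ↓ p`, `e ↦ (p e, e, 𝟙 (p e))`. -/
def iota (p : E ⥤ D) : E ⥤ Comma (𝟭 D) p where
  obj e := { left := p.obj e, right := e, hom := 𝟙 (p.obj e) }
  map {e e'} f := { left := p.map f, right := f, w := by simp }

/-- An object of `Fun_{/D}^{cart}(D ↓ p, G)`: a functor `D ↓ p ⥤ G` lying strictly over
`D` and sending `π`-cartesian morphisms to `q`-cartesian morphisms. -/
structure CartFunOver (p : E ⥤ D) (q : G ⥤ D) where
  func : Comma (𝟭 D) p ⥤ G
  isOver : func ⋙ q = Comma.fst (𝟭 D) p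
  cart : ∀ {X Y : Comma (𝟭 D) p} (m : X ⟶ Y),
    IsCart (Comma.fst (𝟭 D) p) ((Comma.fst (𝟭 D) p).map m) m →
    IsCart q ((Comma.fst (𝟭 D) p).map m) (func.map m)

/-- Morphisms of `Fun_{/D}^{cart}(D ↓ p, G)`: natural transformations whose components
lie over identities of `D`. -/
instance CartFunOver.category (p : E ⥤ D) (q : G ⥤ D) : Category (CartFunOver p q) where
  Hom F G := {α : F.func ⟶ G.func //
    ∀ X : Comma (𝟭 D) p, q.IsHomLift (𝟙 X.left) (α.app X)}
  id F := ⟨𝟙 F.func, fun X => CategoryTheory.IsHomLift.id (Functor.congr_obj F.isOver X)⟩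
  comp {F G H} α β := ⟨α.1 ≫ β.1, fun X => by
    have := α.2 X
    have := β.2 X
    simp only [NatTrans.comp_app]
    infer_instance⟩
  id_comp α := by apply Subtype.ext; simp
  comp_id α := by apply Subtype.ext; simp
  assoc α β γ := by apply Subtype.ext; simp

/-- An object of `Fun_{/D}(E, G)`: a functor `E ⥤ G` lying strictly over `D`. -/
structure FunOver (p : E ⥤ D) (q : G ⥤ D) where
  func : E ⥤ G
  isOver : func ⋙ q = p

/-- Morphisms of `Fun_{/D}(E, G)`: natural transformations whose components lie over
identities of `D`. -/
instance FunOver.category (p : E ⥤ D) (q : G ⥤ D) : Category (FunOver p q) where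
  Hom F G := {α : F.func ⟶ G.func // ∀ e : E, q.IsHomLift (𝟙 (p.obj e)) (α.app e)}
  id F := ⟨𝟙 F.func, fun e => CategoryTheory.IsHomLift.id (Functor.congr_obj F.isOver e)⟩
  comp {F G H} α β := ⟨α.1 ≫ β.1, fun e => by
    have := α.2 e
    have := β.2 e
    simp only [NatTrans.comp_app]
    infer_instance⟩
  id_comp α := by apply Subtype.ext; simp
  comp_id α := by apply Subtype.ext; simp
  assoc α β γ := by apply Subtype.ext; simp

/-- Restriction along `ι : E ⥤ D ↓ p`. -/
def restrictIota (p : E ⥤ D) (q : G ⥤ D) : CartFunOver p q ⥤ FunOver p q where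
  obj F :=
    { func := iota p ⋙ F.func
      isOver := by
        have h : iota p ⋙ (F.func ⋙ q) = iota p ⋙ Comma.fst (𝟭 D) p := by
          rw [F.isOver]
        exact h }
  map {F G} α := ⟨Functor.whiskerLeft (iota p) α.1, fun e => α.2 ((iota p).obj e)⟩
  map_id F := by apply Subtype.ext; rfl
  map_comp α β := by apply Subtype.ext; rfl


namespace FreeFibAux

open Functor CategoryTheory.IsHomLift

section Lemmas

variable {E D G : Type*} [Category E] [Category D] [Category G]

lemma isHomLift_of_eq (q : G ⥤ D) {i j : D} {u u' : i ⟶ j} (h : u = u') {z x : G} {φ : z ⟶ x}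
    (hl : q.IsHomLift u φ) : q.IsHomLift u' φ := h ▸ hl

lemma isCart_of_eq (q : G ⥤ D) {i j : D} {u u' : i ⟶ j} (h : u = u') {z x : G} {φ : z ⟶ x}
    (hc : IsCart q u φ) : IsCart q u' φ := h ▸ hc

lemma IsCart.comp (q : G ⥤ D) {i j k : D} {u : i ⟶ j} {u' : j ⟶ k} {z y x : G}
    {φ : z ⟶ y} {ψ : y ⟶ x} (hφ : IsCart q u φ) (hψ : IsCart q u' ψ) :
    IsCart q (u ≫ u') (φ ≫ ψ) := by
  obtain ⟨hφl, hφu⟩ := hφ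
  obtain ⟨hψl, hψu⟩ := hψ
  constructor
  · haveI := hφl; haveI := hψl; infer_instance
  · intro i' v w τ hτ
    obtain ⟨χ₁, ⟨hχ₁l, hχ₁e⟩, hχ₁u⟩ :=
      hψu (v ≫ u) τ (isHomLift_of_eq q (Category.assoc v u u').symm hτ)
    obtain ⟨χ, ⟨hχl, hχe⟩, hχu⟩ := hφu v χ₁ hχ₁l
    refine ⟨χ, ⟨hχl, by rw [← Category.assoc, hχe, hχ₁e]⟩, ?_⟩
    intro χ' ⟨hl', he'⟩
    have h1 : χ' ≫ φ = χ₁ := by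
      refine hχ₁u (χ' ≫ φ) ⟨?_, by rw [Category.assoc, he']⟩
      haveI := hl'; haveI := hφl; infer_instance
    exact hχu χ' ⟨hl', h1⟩

lemma isCart_left (q : G ⥤ D) {i' i j : D} {v : i' ⟶ i} {u : i ⟶ j} {w z x : G}
    {χ : w ⟶ z} {ψ : z ⟶ x} (hψ : IsCart q u ψ) (hcomp : IsCart q (v ≫ u) (χ ≫ ψ))
    (hχ : q.IsHomLift v χ) : IsCart q v χ := by
  refine ⟨hχ, ?_⟩
  intro i'' v' w' τ hτ
  obtain ⟨σ, ⟨hσl, hσe⟩, hσu⟩ := hcomp.2 v' (τ ≫ ψ) (by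
    haveI := hτ; haveI := hψ.1
    exact isHomLift_of_eq q (by rw [Category.assoc]) (inferInstance :
      q.IsHomLift ((v' ≫ v) ≫ u) (τ ≫ ψ)))
  have key : σ ≫ χ = τ := by
    have huniq := hψ.2 (v' ≫ v) (τ ≫ ψ) (by
      haveI := hτ; haveI := hψ.1; infer_instance)
    refine (huniq.unique ?_ ?_ : σ ≫ χ = τ)
    · constructor
      · haveI := hσl; haveI := hχ; infer_instance
      · rw [Category.assoc]; exact hσe
    · exact ⟨hτ, rfl⟩
  refine ⟨σ, ⟨hσl, key⟩, ?_⟩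
  intro σ' ⟨hl', he'⟩
  exact hσu σ' ⟨hl', by rw [← Category.assoc, he']⟩

lemma IsCart.isIso (q : G ⥤ D) {d : D} {z x : G} {φ : z ⟶ x} (h : IsCart q (𝟙 d) φ) :
    IsIso φ := by
  haveI := h.1
  have hx : q.obj x = d := codomain_eq q (𝟙 d) φ
  have hz : q.obj z = d := domain_eq q (𝟙 d) φ
  have hlift : q.IsHomLift (𝟙 d ≫ 𝟙 d) (𝟙 x) :=
    isHomLift_of_eq q (by simp) (CategoryTheory.IsHomLift.id hx)
  obtain ⟨χ, ⟨hχl, hχe⟩, _⟩ := h.2 (𝟙 d) (𝟙 x) hlift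
  refine ⟨χ, ?_, hχe⟩
  have huniq := h.2 (𝟙 d) φ (isHomLift_of_eq q (by simp) h.1)
  refine huniq.unique ?_ ?_
  · constructor
    · haveI := hχl; haveI := h.1
      exact isHomLift_of_eq q (by simp) (inferInstance : q.IsHomLift (𝟙 d ≫ 𝟙 d) (φ ≫ χ))
    · rw [Category.assoc, hχe, Category.comp_id]
  · exact ⟨CategoryTheory.IsHomLift.id hz, Category.id_comp φ⟩

lemma isCart_map_of_isIso (q : G ⥤ D) {z x : G} (ε : z ⟶ x) [IsIso ε] :
    IsCart q (q.map ε) ε := by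
  refine ⟨inferInstance, ?_⟩
  intro i' v w ψ hψ
  refine ⟨ψ ≫ inv ε, ⟨?_, by simp⟩, ?_⟩
  · haveI := hψ
    haveI : q.IsHomLift (inv (q.map ε)) (inv ε) := by
      haveI : IsIso (q.map ε) := inferInstance
      exact CategoryTheory.IsHomLift.inv q (q.map ε) ε
    exact isHomLift_of_eq q (by simp) (inferInstance :
      q.IsHomLift ((v ≫ q.map ε) ≫ inv (q.map ε)) (ψ ≫ inv ε))
  · intro χ' ⟨_, he'⟩
    rw [← he']; simp

lemma map_isHomLift (q : G ⥤ D) {C : Type*} [Category C] {P : C ⥤ D} {F : C ⥤ G}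
    (h : F ⋙ q = P) {c c' : C} (f : c ⟶ c') : q.IsHomLift (P.map f) (F.map f) := by
  subst h; exact inferInstanceAs (q.IsHomLift (q.map (F.map f)) (F.map f))

lemma map_isCart_of_isIso (q : G ⥤ D) {C : Type*} [Category C] {P : C ⥤ D} {F : C ⥤ G}
    (h : F ⋙ q = P) {c c' : C} (f : c ⟶ c') [IsIso f] : IsCart q (P.map f) (F.map f) := by
  subst h; exact isCart_map_of_isIso q (F.map f)

end Lemmas

section CommaLemmas

variable {E D : Type*} [Category E] [Category D] {p : E ⥤ D}

lemma comma_isCart_of_right_iso {X Y : Comma (𝟭 D) p} (m : X ⟶ Y) [IsIso m.right] :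
    IsCart (Comma.fst (𝟭 D) p) m.left m := by
  constructor
  · exact inferInstanceAs ((Comma.fst (𝟭 D) p).IsHomLift ((Comma.fst (𝟭 D) p).map m) m)
  · intro d' v W ψ hψ
    haveI := hψ
    have hW : W.left = d' := domain_eq (Comma.fst (𝟭 D) p) (v ≫ m.left) ψ
    have hfac : ψ.left = eqToHom hW ≫ v ≫ m.left := by
      have := fac' (Comma.fst (𝟭 D) p) (v ≫ m.left) ψ
      simpa using this
    refine ⟨⟨eqToHom hW ≫ v, ψ.right ≫ inv m.right, ?_⟩, ⟨?_, ?_⟩, ?_⟩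
    · -- w
      have hw := ψ.w
      have hmw := m.w
      simp only [Functor.id_map] at hw hmw
      rw [hfac] at hw
      simp only [Functor.map_comp, Functor.map_inv, Functor.id_map]
      rw [show W.hom ≫ p.map ψ.right ≫ CategoryTheory.inv (p.map m.right)
          = (W.hom ≫ p.map ψ.right) ≫ CategoryTheory.inv (p.map m.right) by simp, ← hw]
      simp [reassoc_of% hmw]
    · exact of_fac' (Comma.fst (𝟭 D) p) v _ hW rfl (by simp)
    · apply CommaMorphism.ext <;> simp [hfac]
    · intro χ' ⟨hl', he'⟩
      haveI := hl'
      apply CommaMorphism.ext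
      · have := fac' (Comma.fst (𝟭 D) p) v χ'
        simpa using this
      · have : χ'.right ≫ m.right = ψ.right := congrArg CommaMorphism.right he'
        rw [IsIso.eq_comp_inv]; exact this

lemma right_isIso_of_isCart {X Y : Comma (𝟭 D) p} (m : X ⟶ Y)
    (hm : IsCart (Comma.fst (𝟭 D) p) ((Comma.fst (𝟭 D) p).map m) m) : IsIso m.right := by
  set X₀ : Comma (𝟭 D) p := ⟨X.left, Y.right, m.left ≫ Y.hom⟩ with hX₀
  have hm : IsCart (Comma.fst (𝟭 D) p) m.left m := hm
  let m₀ : X₀ ⟶ Y := ⟨m.left, 𝟙 Y.right, by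
    show m.left ≫ Y.hom = (m.left ≫ Y.hom) ≫ p.map (𝟙 Y.right)
    rw [p.map_id, Category.comp_id]⟩
  have hm₀ : IsCart (Comma.fst (𝟭 D) p) m₀.left m₀ := comma_isCart_of_right_iso m₀
  have hm₀' : IsCart (Comma.fst (𝟭 D) p) m.left m₀ := hm₀
  obtain ⟨σ, ⟨hσl, hσe⟩, _⟩ := hm.2 (𝟙 X.left) m₀
    (isHomLift_of_eq _ (Category.id_comp m.left).symm hm₀'.1)
  obtain ⟨τ, ⟨hτl, hτe⟩, _⟩ := hm₀'.2 (𝟙 X.left) m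
    (isHomLift_of_eq _ (Category.id_comp m.left).symm hm.1)
  have hand : τ ≫ σ = 𝟙 X := by
    have huniq := hm.2 (𝟙 X.left) m (isHomLift_of_eq _ (Category.id_comp m.left).symm hm.1)
    refine huniq.unique ⟨?_, ?_⟩ ⟨?_, ?_⟩
    · haveI := hτl; haveI := hσl; infer_instance
    · rw [Category.assoc, hσe, hτe]
    · exact CategoryTheory.IsHomLift.id rfl
    · exact Category.id_comp m
  have hand2 : σ ≫ τ = 𝟙 X₀ := by
    have huniq := hm₀'.2 (𝟙 X.left) m₀ (isHomLift_of_eq _ (Category.id_comp m.left).symm hm₀'.1)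
    refine huniq.unique ⟨?_, ?_⟩ ⟨?_, ?_⟩
    · haveI := hσl; haveI := hτl; infer_instance
    · rw [Category.assoc, hτe, hσe]
    · exact CategoryTheory.IsHomLift.id rfl
    · exact Category.id_comp m₀
  have hright : m.right = τ.right := by
    have h := congrArg CommaMorphism.right hτe
    simp only [Comma.comp_right] at h
    simpa [m₀] using h.symm.trans (Category.comp_id _)
  rw [hright]
  refine ⟨σ.right, ?_, ?_⟩
  · have h := congrArg CommaMorphism.right hand
    simpa using h
  · have h := congrArg CommaMorphism.right hand2
    simpa using h


/-- The canonical cartesian morphism `X ⟶ ι X.right`. -/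
@[simps]
def kappa (p : E ⥤ D) (X : Comma (𝟭 D) p) : X ⟶ (iota p).obj X.right where
  left := X.hom
  right := 𝟙 X.right
  w := by simp [iota]

lemma kappa_isCart (p : E ⥤ D) (X : Comma (𝟭 D) p) :
    IsCart (Comma.fst (𝟭 D) p) ((Comma.fst (𝟭 D) p).map (kappa p X)) (kappa p X) := by
  show IsCart (Comma.fst (𝟭 D) p) (kappa p X).left (kappa p X)
  haveI : IsIso (kappa p X).right := inferInstanceAs (IsIso (𝟙 X.right))
  exact comma_isCart_of_right_iso (kappa p X)

lemma kappa_naturality (p : E ⥤ D) {X Y : Comma (𝟭 D) p} (m : X ⟶ Y) :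
    m ≫ kappa p Y = kappa p X ≫ (iota p).map m.right := by
  apply CommaMorphism.ext
  · simpa [kappa, iota] using m.w
  · simp [kappa, iota]

lemma kappa_iota (p : E ⥤ D) (e : E) : kappa p ((iota p).obj e) = 𝟙 ((iota p).obj e) := by
  apply CommaMorphism.ext <;> simp [kappa, iota]

end CommaLemmas

section Lift

variable {E D G : Type*} [Category E] [Category D] [Category G]
variable (p : E ⥤ D) (q : G ⥤ D)
variable (hfib : ∀ {i j : D} (u : i ⟶ j) (x : G), q.obj x = j →
      ∃ (z : G) (φ : z ⟶ x), IsCart q u φ)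
variable (F : FunOver p q)

noncomputable def liftObj (X : Comma (𝟭 D) p) : G :=
  (hfib X.hom (F.func.obj X.right) (Functor.congr_obj F.isOver X.right)).choose

noncomputable def liftHom (X : Comma (𝟭 D) p) :
    liftObj p q hfib F X ⟶ F.func.obj X.right :=
  (hfib X.hom (F.func.obj X.right) (Functor.congr_obj F.isOver X.right)).choose_spec.choose

lemma liftHom_isCart (X : Comma (𝟭 D) p) : IsCart q X.hom (liftHom p q hfib F X) :=
  (hfib X.hom (F.func.obj X.right)
    (Functor.congr_obj F.isOver X.right)).choose_spec.choose_spec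

lemma liftMap_aux {X Y : Comma (𝟭 D) p} (m : X ⟶ Y) :
    ∃! χ : liftObj p q hfib F X ⟶ liftObj p q hfib F Y,
      q.IsHomLift m.left χ ∧
        χ ≫ liftHom p q hfib F Y = liftHom p q hfib F X ≫ F.func.map m.right := by
  apply (liftHom_isCart p q hfib F Y).2 m.left
  haveI := (liftHom_isCart p q hfib F X).1
  haveI := map_isHomLift q F.isOver m.right
  exact isHomLift_of_eq q (by simpa using m.w.symm)
    (inferInstance : q.IsHomLift (X.hom ≫ p.map m.right) _)

noncomputable def liftMap {X Y : Comma (𝟭 D) p} (m : X ⟶ Y) :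
    liftObj p q hfib F X ⟶ liftObj p q hfib F Y :=
  (liftMap_aux p q hfib F m).choose

lemma liftMap_lift {X Y : Comma (𝟭 D) p} (m : X ⟶ Y) :
    q.IsHomLift m.left (liftMap p q hfib F m) :=
  (liftMap_aux p q hfib F m).choose_spec.1.1

lemma liftMap_fac {X Y : Comma (𝟭 D) p} (m : X ⟶ Y) :
    liftMap p q hfib F m ≫ liftHom p q hfib F Y
      = liftHom p q hfib F X ≫ F.func.map m.right :=
  (liftMap_aux p q hfib F m).choose_spec.1.2

lemma liftMap_unique {X Y : Comma (𝟭 D) p} (m : X ⟶ Y)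
    (χ : liftObj p q hfib F X ⟶ liftObj p q hfib F Y) (h1 : q.IsHomLift m.left χ)
    (h2 : χ ≫ liftHom p q hfib F Y = liftHom p q hfib F X ≫ F.func.map m.right) :
    χ = liftMap p q hfib F m :=
  (liftMap_aux p q hfib F m).choose_spec.2 χ ⟨h1, h2⟩

/-- The extension of `F` to a cartesian functor on the comma category. -/
noncomputable def LF : CartFunOver p q where
  func :=
    { obj := liftObj p q hfib F
      map := liftMap p q hfib F
      map_id := fun X => by
        haveI := (liftHom_isCart p q hfib F X).1
        refine (liftMap_unique p q hfib F (𝟙 X) (𝟙 _) ?_ (by simp)).symm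
        exact CategoryTheory.IsHomLift.id
          (CategoryTheory.IsHomLift.domain_eq q X.hom (liftHom p q hfib F X))
      map_comp := fun {X Y Z} m m' => by
        refine (liftMap_unique p q hfib F (m ≫ m') _ ?_ ?_).symm
        · haveI := liftMap_lift p q hfib F m
          haveI := liftMap_lift p q hfib F m'
          exact inferInstanceAs (q.IsHomLift (m.left ≫ m'.left) _)
        · rw [Category.assoc, liftMap_fac, ← Category.assoc, liftMap_fac,
            Category.assoc, ← Functor.map_comp]
          rfl }
  isOver := by
    have hobj : ∀ X : Comma (𝟭 D) p, q.obj (liftObj p q hfib F X) = X.left := fun X => by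
      haveI := (liftHom_isCart p q hfib F X).1
      exact CategoryTheory.IsHomLift.domain_eq q X.hom (liftHom p q hfib F X)
    exact CategoryTheory.Functor.ext (h_obj := hobj) (h_map := fun X Y m => by
      haveI := liftMap_lift p q hfib F m
      exact CategoryTheory.IsHomLift.fac' q m.left (liftMap p q hfib F m))
  cart := fun {X Y} m hm => by
    haveI : IsIso m.right := right_isIso_of_isCart m hm
    show IsCart q m.left (liftMap p q hfib F m)
    refine isCart_left q (liftHom_isCart p q hfib F Y) ?_ (liftMap_lift p q hfib F m)
    rw [liftMap_fac]
    exact isCart_of_eq q (by simpa using m.w.symm)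
      (IsCart.comp q (liftHom_isCart p q hfib F X) (map_isCart_of_isIso q F.isOver m.right))

lemma liftHom_iota_isIso (e : E) : IsIso (liftHom p q hfib F ((iota p).obj e)) :=
  IsCart.isIso q (liftHom_isCart p q hfib F ((iota p).obj e))

end Lift



end FreeFibAux

open FreeFibAux CategoryTheory.IsHomLift

/-- **The comma category is the free fibration on `p : E ⥤ D`.**
If `q : G ⥤ D` is a (cloven) Grothendieck fibration, restriction along
`ι : E ⥤ D ↓ p` is an equivalence between the category of cartesian functors
`D ↓ p ⥤ G` over `D` and the category of all functors `E ⥤ G` over `D`. -/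
theorem restrictIota_isEquivalence (p : E ⥤ D) (q : G ⥤ D)
    (hfib : ∀ {i j : D} (u : i ⟶ j) (x : G), q.obj x = j →
      ∃ (z : G) (φ : z ⟶ x), IsCart q u φ) :
    (restrictIota p q).IsEquivalence := by
  have faithful : (restrictIota p q).Faithful := by
    refine ⟨fun {F G'} α β h => ?_⟩
    have hval := congrArg Subtype.val h
    have h' : ∀ e : E, α.1.app ((iota p).obj e) = β.1.app ((iota p).obj e) := fun e =>
      NatTrans.congr_app hval e
    apply Subtype.ext
    ext X
    have hκ : IsCart q X.hom (G'.func.map (kappa p X)) := G'.cart (kappa p X) (kappa_isCart p X)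
    have hlift : q.IsHomLift (𝟙 X.left ≫ X.hom)
        (F.func.map (kappa p X) ≫ α.1.app ((iota p).obj X.right)) := by
      haveI : q.IsHomLift X.hom (F.func.map (kappa p X)) := map_isHomLift q F.isOver (kappa p X)
      haveI : q.IsHomLift (𝟙 (p.obj X.right)) (α.1.app ((iota p).obj X.right)) :=
        α.2 ((iota p).obj X.right)
      exact isHomLift_of_eq q (Category.id_comp X.hom).symm
        (comp_lift_id_right' q X.hom (F.func.map (kappa p X)) (p.obj X.right) _)
    have huniq := hκ.2 (𝟙 X.left) _ hlift
    refine huniq.unique ⟨α.2 X, (α.1.naturality (kappa p X)).symm⟩ ⟨β.2 X, ?_⟩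
    rw [h' X.right]
    exact (β.1.naturality (kappa p X)).symm
  have full : (restrictIota p q).Full := by
    refine ⟨fun {F G'} γ => ?_⟩
    have key : ∀ X : Comma (𝟭 D) p, ∃! χ : F.func.obj X ⟶ G'.func.obj X,
        q.IsHomLift (𝟙 X.left) χ ∧
          χ ≫ G'.func.map (kappa p X)
            = F.func.map (kappa p X) ≫ γ.1.app X.right := by
      intro X
      have hκ : IsCart q X.hom (G'.func.map (kappa p X)) := G'.cart (kappa p X) (kappa_isCart p X)
      apply hκ.2 (𝟙 X.left)
      haveI : q.IsHomLift X.hom (F.func.map (kappa p X)) := map_isHomLift q F.isOver (kappa p X)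
      haveI : q.IsHomLift (𝟙 (p.obj X.right)) (γ.1.app X.right) := γ.2 X.right
      exact isHomLift_of_eq q (Category.id_comp X.hom).symm
        (@comp_lift_id_right' _ _ _ _ q _ _ _ _ _ X.hom (F.func.map (kappa p X)) _ (p.obj X.right) _ (γ.2 X.right))
    choose χ hP hu using key
    have hl := fun X => (hP X).1
    have he := fun X => (hP X).2
    have hnat : ∀ {X Y : Comma (𝟭 D) p} (m : X ⟶ Y),
        χ X ≫ G'.func.map m = F.func.map m ≫ χ Y := by
      intro X Y m
      have hκY : IsCart q Y.hom (G'.func.map (kappa p Y)) := G'.cart (kappa p Y) (kappa_isCart p Y)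
      have hψ : q.IsHomLift (m.left ≫ Y.hom)
          (F.func.map (m ≫ kappa p Y) ≫ γ.1.app Y.right) := by
        haveI : q.IsHomLift (m.left ≫ Y.hom) (F.func.map (m ≫ kappa p Y)) :=
          map_isHomLift q F.isOver (m ≫ kappa p Y)
        haveI : q.IsHomLift (𝟙 (p.obj Y.right)) (γ.1.app Y.right) := γ.2 Y.right
        exact @comp_lift_id_right' _ _ _ _ q _ _ _ _ _ (m.left ≫ Y.hom) _ _ (p.obj Y.right) _ (γ.2 Y.right)
      have huniq := hκY.2 m.left _ hψ
      have hγnat : F.func.map ((iota p).map m.right) ≫ (γ.1).app Y.right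
          = (γ.1).app X.right ≫ G'.func.map ((iota p).map m.right) :=
        γ.1.naturality m.right
      have c1 : (χ X ≫ G'.func.map m) ≫ G'.func.map (kappa p Y)
          = F.func.map (m ≫ kappa p Y) ≫ γ.1.app Y.right := by
        erw [Category.assoc, ← Functor.map_comp, kappa_naturality p m, Functor.map_comp,
          ← Category.assoc, he X, Category.assoc, ← hγnat, ← Category.assoc,
          ← Functor.map_comp, ← kappa_naturality p m, Functor.map_comp, Category.assoc]
      have c2 : (F.func.map m ≫ χ Y) ≫ G'.func.map (kappa p Y)
          = F.func.map (m ≫ kappa p Y) ≫ γ.1.app Y.right := by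
        erw [Category.assoc, he Y, Functor.map_comp, Category.assoc]
        rfl
      have l1 : q.IsHomLift m.left (χ X ≫ G'.func.map m) := by
        haveI := hl X
        haveI : q.IsHomLift m.left (G'.func.map m) := map_isHomLift q G'.isOver m
        exact comp_lift_id_left' q X.left (χ X) m.left _
      have l2 : q.IsHomLift m.left (F.func.map m ≫ χ Y) := by
        haveI : q.IsHomLift m.left (F.func.map m) := map_isHomLift q F.isOver m
        haveI := hl Y
        exact comp_lift_id_right' q m.left (F.func.map m) Y.left _
      exact huniq.unique ⟨l1, c1⟩ ⟨l2, c2⟩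
    refine ⟨⟨{ app := χ, naturality := fun X Y m => (hnat m).symm }, fun X => hl X⟩, ?_⟩
    apply Subtype.ext
    ext e
    refine (hu ((iota p).obj e) (γ.1.app e) ⟨γ.2 e, ?_⟩).symm
    rw [kappa_iota]
    show (γ.1).app e ≫ G'.func.map (𝟙 ((iota p).obj e))
        = F.func.map (𝟙 ((iota p).obj e)) ≫ (γ.1).app e
    rw [CategoryTheory.Functor.map_id, CategoryTheory.Functor.map_id]
    exact (Category.comp_id _).trans (Category.id_comp _).symm
  have essSurj : (restrictIota p q).EssSurj := by
    refine ⟨fun F => ⟨LF p q @hfib F, ⟨?_⟩⟩⟩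
    haveI : ∀ e : E, IsIso (liftHom p q @hfib F ((iota p).obj e)) :=
      liftHom_iota_isIso p q @hfib F
    refine
      { hom := ⟨{ app := fun e => liftHom p q @hfib F ((iota p).obj e),
                  naturality := fun e e' f => liftMap_fac p q @hfib F ((iota p).map f) },
            fun e => (liftHom_isCart p q @hfib F ((iota p).obj e)).1⟩
        inv := ⟨{ app := fun e => inv (liftHom p q @hfib F ((iota p).obj e)) (I := liftHom_iota_isIso p q @hfib F e),
                  naturality := fun e e' f => by
                    erw [IsIso.comp_inv_eq]
                    show F.func.map f
                        = (inv (liftHom p q @hfib F ((iota p).obj e))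
                            ≫ liftMap p q @hfib F ((iota p).map f))
                          ≫ liftHom p q @hfib F ((iota p).obj e')
                    rw [Category.assoc, liftMap_fac p q @hfib F ((iota p).map f)]
                    simp [iota] },
            fun e => ?_⟩
        hom_inv_id := by
          apply Subtype.ext; ext e
          exact IsIso.hom_inv_id (liftHom p q @hfib F ((iota p).obj e))
        inv_hom_id := by
          apply Subtype.ext; ext e
          exact IsIso.inv_hom_id (liftHom p q @hfib F ((iota p).obj e)) }
    haveI : q.IsHomLift (𝟙 (p.obj e))
        ((asIso (liftHom p q @hfib F ((iota p).obj e))).hom) :=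
      (liftHom_isCart p q @hfib F ((iota p).obj e)).1
    exact inferInstanceAs
      (q.IsHomLift (𝟙 (p.obj e)) ((asIso (liftHom p q @hfib F ((iota p).obj e))).inv))
  exact { faithful := faithful, full := full, essSurj := essSurj }
end

section
/- Let q : E ⥤ D be a cloven Grothendieck fibration and d : D. Let Fun_{/D}^{cart}(Over d, E) denote the category of functors F : Over d ⥤ E with F ⋙ q equal to the forgetful functor Over d ⥤ D, sending all morphisms of Over d to q-cartesian morphisms of E, with morphisms the natural transformations lying over identities. Then evaluation at the object 𝟙_d of Over d induces an equivalence of categories Fun_{/D}^{cart}(Over d, E) ≃ E_d, where E_d is the fibre of q over d. -/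
open CategoryTheory CategoryTheory.Limits

variable {C E : Type*} [Category C] [Category E]

/-- An object of `Fun_{/D}^{cart}(Over d, E)`: a functor `Over d ⥤ E` lying strictly over
`C` (via `q` and the forgetful functor) and sending every morphism of `Over d` to a
`q`-cartesian morphism of `E`. -/
structure CartSec (q : E ⥤ C) (d : C) where
  func : Over d ⥤ E
  isOver : func ⋙ q = Over.forget d
  cart : ∀ {A B : Over d} (m : A ⟶ B), IsCart q ((Over.forget d).map m) (func.map m)

/-- Morphisms in `Fun_{/D}^{cart}(Over d, E)` are natural transformations all of whose
components lie over identities. -/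
instance CartSec.category (q : E ⥤ C) (d : C) : Category (CartSec q d) where
  Hom F G := {α : F.func ⟶ G.func // ∀ A : Over d, q.IsHomLift (𝟙 A.left) (α.app A)}
  id F := ⟨𝟙 F.func, fun A => CategoryTheory.IsHomLift.id (Functor.congr_obj F.isOver A)⟩
  comp {F G H} α β := ⟨α.1 ≫ β.1, fun A => by
    have := α.2 A
    have := β.2 A
    simp only [NatTrans.comp_app]
    infer_instance⟩
  id_comp α := by apply Subtype.ext; simp
  comp_id α := by apply Subtype.ext; simp
  assoc α β γ := by apply Subtype.ext; simp

/-- Evaluation at the object `𝟙 d` of `Over d`. -/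
def evalAtId (q : E ⥤ C) (d : C) : CartSec q d ⥤ Functor.Fiber q d where
  obj F := Functor.Fiber.mk (Functor.congr_obj F.isOver (Over.mk (𝟙 d)))
  map {F G} α := Subtype.mk ((Subtype.val α).app (Over.mk (𝟙 d))) (Subtype.property α (Over.mk (𝟙 d)))
  map_id F := by apply Subtype.ext; rfl
  map_comp α β := by apply Subtype.ext; rfl

section Auxiliary

open Functor IsHomLift

variable {q : E ⥤ C} {d : C}

lemma isCart_congr {q : E ⥤ C} {i j : C} {f g : i ⟶ j} (h : f = g) {a b : E} {φ : a ⟶ b}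
    (hl : IsCart q f φ) : IsCart q g φ := by cases h; exact hl

lemma lift_congr {i j : C} {f g : i ⟶ j} (h : f = g) {a b : E} {φ : a ⟶ b}
    (hl : q.IsHomLift f φ) : q.IsHomLift g φ := by cases h; exact hl

/-- Left cancellation for cartesian morphisms. -/
lemma IsCart.cancel {i j k : C} {u : j ⟶ k} {v : i ⟶ j} {x y z : E}
    {φ : y ⟶ x} {χ : z ⟶ y} (hφ : IsCart q u φ) (hχφ : IsCart q (v ≫ u) (χ ≫ φ))
    (hχ : q.IsHomLift v χ) : IsCart q v χ := by
  refine ⟨hχ, fun i' t w ψ hψ => ?_⟩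
  haveI := hψ
  haveI := hφ.1
  have hψφ : q.IsHomLift (t ≫ v ≫ u) (ψ ≫ φ) := by
    have : q.IsHomLift ((t ≫ v) ≫ u) (ψ ≫ φ) := inferInstance
    rwa [Category.assoc] at this
  obtain ⟨ρ, ⟨hρl, hρf⟩, hρu⟩ := hχφ.2 t (ψ ≫ φ) hψφ
  have hfac : ρ ≫ χ = ψ := by
    haveI := hρl
    have h1 : q.IsHomLift (t ≫ v) (ρ ≫ χ) := inferInstance
    have h2 : q.IsHomLift ((t ≫ v) ≫ u) (ψ ≫ φ) := inferInstance
    obtain ⟨σ, _, hσu⟩ := hφ.2 (t ≫ v) (ψ ≫ φ) h2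
    rw [hσu (ρ ≫ χ) ⟨h1, by rw [Category.assoc, hρf]⟩, hσu ψ ⟨hψ, rfl⟩]
  exact ⟨ρ, ⟨hρl, hfac⟩, fun ρ' h => hρu ρ' ⟨h.1, by rw [← Category.assoc, h.2]⟩⟩

/-- The unique morphism to the terminal object `Over.mk (𝟙 d)`. -/
def toTerm (A : Over d) : A ⟶ Over.mk (𝟙 d) := Over.homMk A.hom

lemma toTerm_comp {A B : Over d} (m : A ⟶ B) : m ≫ toTerm B = toTerm A :=
  Over.mkIdTerminal.hom_ext _ _

lemma toTerm_self : toTerm (Over.mk (𝟙 d)) = 𝟙 (Over.mk (𝟙 d)) :=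
  Over.mkIdTerminal.hom_ext _ _

lemma sec_lift (F : CartSec q d) {A B : Over d} (m : A ⟶ B) :
    q.IsHomLift m.left (F.func.map m) := (F.cart m).1

/-- The fundamental existence-and-uniqueness of components. -/
lemma existsUnique_comp (F G : CartSec q d)
    (f : F.func.obj (Over.mk (𝟙 d)) ⟶ G.func.obj (Over.mk (𝟙 d)))
    (hf : q.IsHomLift (𝟙 d) f) (A : Over d) :
    ∃! χ : F.func.obj A ⟶ G.func.obj A,
      q.IsHomLift (𝟙 A.left) χ ∧
        χ ≫ G.func.map (toTerm A) = F.func.map (toTerm A) ≫ f := by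
  haveI := sec_lift F (toTerm A)
  haveI := hf
  have h : q.IsHomLift (𝟙 A.left ≫ A.hom) (F.func.map (toTerm A) ≫ f) := by
    have h0 : q.IsHomLift (A.hom ≫ 𝟙 d) (F.func.map (toTerm A) ≫ f) := by
      have : (toTerm A).left = A.hom := rfl
      rw [← this]; infer_instance
    exact lift_congr (by simp) h0
  exact (G.cart (toTerm A)).2 (𝟙 A.left) (F.func.map (toTerm A) ≫ f) h

end Auxiliary

/-- **The slice `Over d` is the free fibration on the single object `d`**
(1-categorical Yoneda lemma for fibrations): for a cloven Grothendieck fibration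
`q : E ⥤ C` and `d : C`, evaluation at `𝟙 d` is an equivalence between the category of
cartesian functors `Over d ⥤ E` over `C` and the fibre of `q` over `d`. -/
theorem evalAtId_isEquivalence (q : E ⥤ C) (d : C)
    (hfib : ∀ {i j : C} (u : i ⟶ j) (x : E), q.obj x = j →
      ∃ (z : E) (φ : z ⟶ x), IsCart q u φ) :
    (evalAtId q d).IsEquivalence := by
  haveI hfaith : (evalAtId q d).Faithful := by
    refine ⟨fun {F G} {α β} hEq => ?_⟩
    have h' : (Subtype.val α).app (Over.mk (𝟙 d)) = (Subtype.val β).app (Over.mk (𝟙 d)) := congrArg Subtype.val hEq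
    apply Subtype.ext; apply NatTrans.ext; funext A
    obtain ⟨χ, _, huniq⟩ := existsUnique_comp F G ((Subtype.val α).app (Over.mk (𝟙 d))) (Subtype.property α (Over.mk (𝟙 d))) A
    have h1 : (Subtype.val α).app A = χ := huniq _ ⟨Subtype.property α A, ((Subtype.val α).naturality (toTerm A)).symm⟩
    have h2 : (Subtype.val β).app A = χ := huniq _ ⟨Subtype.property β A, by rw [← (Subtype.val β).naturality (toTerm A), h']⟩
    rw [h1, h2]
  haveI hfull : (evalAtId q d).Full := by
    refine ⟨fun {F G} f => ?_⟩
    have hf : q.IsHomLift (𝟙 d) f.1 := f.2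
    have hc := fun A => (existsUnique_comp F G f.1 hf A).choose_spec
    have nat : ∀ {A B : Over d} (m : A ⟶ B),
        F.func.map m ≫ (existsUnique_comp F G f.1 hf B).choose =
          (existsUnique_comp F G f.1 hf A).choose ≫ G.func.map m := by
      intro A B m
      haveI := sec_lift F m
      haveI := sec_lift G m
      haveI := (hc A).1.1
      haveI := (hc B).1.1
      haveI := sec_lift F (toTerm A)
      haveI := hf
      have hbase : q.IsHomLift (m.left ≫ B.hom) (F.func.map (toTerm A) ≫ f.1) := by
        have h0 : q.IsHomLift ((toTerm A).left ≫ 𝟙 d) (F.func.map (toTerm A) ≫ f.1) :=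
          @IsHomLift.comp _ _ _ _ q _ _ _ _ _ _ _ _ _ _ (sec_lift F (toTerm A)) hf
        exact lift_congr (by simpa [toTerm] using (Over.w m).symm) h0
      obtain ⟨χ, _, huniq⟩ := (G.cart (toTerm B)).2 m.left (F.func.map (toTerm A) ≫ f.1) hbase
      have e1 : F.func.map m ≫ (existsUnique_comp F G f.1 hf B).choose = χ :=
        huniq (F.func.map m ≫ (existsUnique_comp F G f.1 hf B).choose)
          ⟨IsHomLift.comp_lift_id_right' q m.left (F.func.map m) B.left
            ((existsUnique_comp F G f.1 hf B).choose), by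
          rw [Category.assoc, (hc B).1.2]; erw [← Category.assoc, ← Functor.map_comp, toTerm_comp]⟩
      have e2 : (existsUnique_comp F G f.1 hf A).choose ≫ G.func.map m = χ :=
        huniq ((existsUnique_comp F G f.1 hf A).choose ≫ G.func.map m)
          ⟨IsHomLift.comp_lift_id_left' q A.left
            ((existsUnique_comp F G f.1 hf A).choose) m.left (G.func.map m), by
          rw [Category.assoc, ← Functor.map_comp, toTerm_comp]; exact (hc A).1.2⟩
      rw [e1, e2]
    refine ⟨Subtype.mk ⟨fun A => (existsUnique_comp F G f.1 hf A).choose, fun A B m => nat m⟩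
      (fun A => (hc A).1.1), ?_⟩
    apply Subtype.ext
    show (existsUnique_comp F G f.1 hf (Over.mk (𝟙 d))).choose = f.1
    exact ((hc (Over.mk (𝟙 d))).2 f.1 ⟨hf, by rw [toTerm_self]; simp; exact (Category.comp_id _).trans (Category.id_comp _).symm⟩).symm
  haveI hess : (evalAtId q d).EssSurj := by
    refine ⟨fun X => ?_⟩
    obtain ⟨x, hx⟩ := X
    choose z φ hφ using fun A : Over d => hfib A.hom x hx
    have fac : ∀ {A B : Over d} (m : A ⟶ B), ∃! χ : z A ⟶ z B,
        q.IsHomLift m.left χ ∧ χ ≫ φ B = φ A := by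
      intro A B m
      have h : q.IsHomLift (m.left ≫ B.hom) (φ A) := lift_congr (Over.w m).symm (hφ A).1
      exact (hφ B).2 m.left (φ A) h
    have hobj : ∀ A : Over d, q.obj (z A) = A.left := fun A => by
      haveI := (hφ A).1; exact IsHomLift.domain_eq q A.hom (φ A)
    let Func : Over d ⥤ E := {
      obj := z
      map := fun {A B} m => (fac m).choose
      map_id := fun A => ((fac (𝟙 A)).choose_spec.2 (𝟙 (z A))
        ⟨IsHomLift.id (hobj A), Category.id_comp _⟩).symm
      map_comp := fun {A B B'} m m' => ((fac (m ≫ m')).choose_spec.2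
        ((fac m).choose ≫ (fac m').choose) ⟨by
          haveI := (fac m).choose_spec.1.1
          haveI := (fac m').choose_spec.1.1
          exact IsHomLift.comp q m.left m'.left _ _,
        by rw [Category.assoc, (fac m').choose_spec.1.2, (fac m).choose_spec.1.2]⟩).symm }
    have hov : Func ⋙ q = Over.forget d := by
      refine CategoryTheory.Functor.ext hobj ?_
      intro A B m
      haveI := (fac m).choose_spec.1.1
      exact IsHomLift.fac' q m.left (fac m).choose
    have hcart : ∀ {A B : Over d} (m : A ⟶ B),
        IsCart q ((Over.forget d).map m) (fac m).choose := by
      intro A B m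
      have h1 : IsCart q (m.left ≫ B.hom) ((fac m).choose ≫ φ B) := by
        rw [(fac m).choose_spec.1.2]
        exact isCart_congr (Over.w m).symm (hφ A)
      exact IsCart.cancel (hφ B) h1 (fac m).choose_spec.1.1
    haveI h1 : q.IsHomLift (𝟙 d) (φ (Over.mk (𝟙 d))) :=
      lift_congr (show (Over.mk (𝟙 d)).hom = 𝟙 d from rfl) (hφ (Over.mk (𝟙 d))).1
    have h0 : q.IsHomLift (𝟙 d ≫ (Over.mk (𝟙 d)).hom) (𝟙 x) :=
      lift_congr (by simp) (IsHomLift.id hx)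
    obtain ⟨ι, ⟨hιl, hιf⟩, _⟩ := (hφ (Over.mk (𝟙 d))).2 (𝟙 d) (𝟙 x) h0
    haveI := hιl
    have hinv : φ (Over.mk (𝟙 d)) ≫ ι = 𝟙 (z (Over.mk (𝟙 d))) := by
      have h2 : q.IsHomLift (𝟙 d ≫ (Over.mk (𝟙 d)).hom) (φ (Over.mk (𝟙 d))) :=
        lift_congr (Category.id_comp _).symm (hφ (Over.mk (𝟙 d))).1
      obtain ⟨σ, _, hσu⟩ := (hφ (Over.mk (𝟙 d))).2 (𝟙 d) (φ (Over.mk (𝟙 d))) h2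
      rw [hσu (φ (Over.mk (𝟙 d)) ≫ ι)
            ⟨inferInstance, by rw [Category.assoc, hιf, Category.comp_id]⟩,
          hσu (𝟙 (z (Over.mk (𝟙 d))))
            ⟨IsHomLift.id (hobj (Over.mk (𝟙 d))), Category.id_comp _⟩]
    refine ⟨⟨Func, hov, fun m => hcart m⟩, ⟨{
      hom := ⟨φ (Over.mk (𝟙 d)), h1⟩
      inv := ⟨ι, hιl⟩
      hom_inv_id := Subtype.ext hinv
      inv_hom_id := Subtype.ext hιf }⟩⟩
  exact ⟨hfaith, hfull, hess⟩
end
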